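/- Let n ≥ 4 and 1 ≤ k ≤ n/2 be integers. Then there exists an integer j with 1 ≤ j ≤ n − 1 such that cos(2πj/n) + cos(2πjk/n) + √((cos(2πj/n) − cos(2πjk/n))² + 1) > 3 − 4π/(⌊√n⌋ − 1). -/

import Mathlib

open Real

set_option maxHeartbeats 1000000 in
/-- For `n ≥ 4` and `1 ≤ k ≤ n/2`, some index `1 ≤ j ≤ n - 1` in the
Gera–Stănică formula for the eigenvalues of `P(n,k)` yields an eigenvalue
greater than `3 - 4π / (⌊√n⌋ - 1)`. -/
theorem petersen_eigenvalue_formula_close_to_three (n k : ℕ) (hn : 4 ≤ n)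
    (hk1 : 1 ≤ k) (hk2 : 2 * k ≤ n) :
    ∃ j : ℕ, 1 ≤ j ∧ j ≤ n - 1 ∧
      cos (2 * π * (j : ℝ) / (n : ℝ)) + cos (2 * π * (j : ℝ) * (k : ℝ) / (n : ℝ)) +
        Real.sqrt ((cos (2 * π * (j : ℝ) / (n : ℝ)) -
          cos (2 * π * (j : ℝ) * (k : ℝ) / (n : ℝ))) ^ 2 + 1) >
      3 - 4 * π / ((Nat.sqrt n : ℝ) - 1) := by
  have hs2 : 2 ≤ Nat.sqrt n := Nat.le_sqrt.mpr (by omega)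
  set s := Nat.sqrt n with hs
  have hspos : 0 < s := by omega
  have hnpos : (0:ℝ) < n := by positivity
  obtain ⟨m, q, hq0, hqs, habs⟩ :=
    Real.exists_int_int_abs_mul_sub_le ((k : ℝ) / n) hspos
  refine ⟨q.toNat, ?_, ?_, ?_⟩
  · omega
  · have h1 : q.toNat ≤ s := by omega
    have h2 : s < n := Nat.sqrt_lt_self (by omega)
    omega
  have hjq : ((q.toNat : ℕ) : ℝ) = (q : ℝ) := by
    exact_mod_cast Int.toNat_of_nonneg hq0.le
  have hsR2 : (2:ℝ) ≤ (s:ℝ) := by exact_mod_cast hs2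
  have hsRpos : (0:ℝ) < (s:ℝ) := by linarith
  have hqR : (0:ℝ) < (q:ℝ) := by exact_mod_cast hq0
  have hqsR : (q:ℝ) ≤ (s:ℝ) := by exact_mod_cast hqs
  have hs_sq : (s:ℝ) ^ 2 ≤ (n:ℝ) := by
    exact_mod_cast Nat.sqrt_le' n
  -- bound on cos(2πj/n)
  have ha : cos (2 * π * (q:ℝ) / n) ≥ 1 - 2 * π ^ 2 / (s:ℝ) ^ 2 := by
    have habd : 2 * π * (q:ℝ) / n ≤ 2 * π / s := by
      rw [div_le_div_iff₀ hnpos hsRpos]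
      have hqn : (q:ℝ) * s ≤ n := by nlinarith
      nlinarith [Real.pi_pos]
    have h0 : 0 ≤ 2 * π * (q:ℝ) / n := by positivity
    have hx2 : (2 * π * (q:ℝ) / n) ^ 2 ≤ (2 * π / (s:ℝ)) ^ 2 := by
      nlinarith
    calc cos (2 * π * (q:ℝ) / n) ≥ 1 - (2 * π * (q:ℝ) / n) ^ 2 / 2 :=
          Real.one_sub_sq_div_two_le_cos
      _ ≥ 1 - (2 * π / (s:ℝ)) ^ 2 / 2 := by linarith
      _ = 1 - 2 * π ^ 2 / (s:ℝ) ^ 2 := by field_simp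
  -- bound on cos(2πjk/n)
  have hb : cos (2 * π * (q:ℝ) * k / n) ≥ 1 - 2 * π ^ 2 / (s:ℝ) ^ 2 := by
    have hper : cos (2 * π * (q:ℝ) * k / n)
        = cos (2 * π * ((q:ℝ) * ((k:ℝ)/n) - m)) := by
      have heq : 2 * π * (q:ℝ) * k / n
          = 2 * π * ((q:ℝ) * ((k:ℝ)/n) - m) + (m : ℤ) * (2 * π) := by
        push_cast; field_simp; ring
      rw [heq, Real.cos_add_int_mul_two_pi]
    set θ : ℝ := 2 * π * ((q:ℝ) * ((k:ℝ)/n) - m) with hθ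
    have hθbd : |θ| ≤ 2 * π / ((s:ℝ) + 1) := by
      calc |θ| = 2 * π * |(q:ℝ) * ((k:ℝ)/n) - m| := by
            rw [hθ, abs_mul, abs_of_pos (by positivity : (0:ℝ) < 2 * π)]
        _ ≤ 2 * π * (1 / ((s:ℝ) + 1)) :=
            mul_le_mul_of_nonneg_left habs (by positivity)
        _ = 2 * π / ((s:ℝ) + 1) := by ring
    have hx2 : θ ^ 2 ≤ (2 * π / ((s:ℝ) + 1)) ^ 2 := by
      nlinarith [sq_abs θ, abs_nonneg θ]
    have hmono : (2 * π / ((s:ℝ) + 1)) ^ 2 ≤ (2 * π / (s:ℝ)) ^ 2 := by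
      have hle : 2 * π / ((s:ℝ) + 1) ≤ 2 * π / (s:ℝ) := by
        apply div_le_div_of_nonneg_left (by positivity) hsRpos (by linarith)
      exact pow_le_pow_left₀ (by positivity) hle 2
    rw [hper]
    calc cos θ ≥ 1 - θ ^ 2 / 2 := Real.one_sub_sq_div_two_le_cos
      _ ≥ 1 - (2 * π / (s:ℝ)) ^ 2 / 2 := by linarith
      _ = 1 - 2 * π ^ 2 / (s:ℝ) ^ 2 := by field_simp
  -- sqrt term ≥ 1
  have hsqrt : Real.sqrt ((cos (2 * π * (q:ℝ) / n) -
      cos (2 * π * (q:ℝ) * k / n)) ^ 2 + 1) ≥ 1 := by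
    have h := Real.sqrt_le_sqrt (show (1:ℝ) ≤
        (cos (2 * π * (q:ℝ) / n) - cos (2 * π * (q:ℝ) * k / n)) ^ 2 + 1 by
      nlinarith [sq_nonneg (cos (2 * π * (q:ℝ) / n) - cos (2 * π * (q:ℝ) * k / n))])
    rwa [Real.sqrt_one] at h
  -- final arithmetic
  have hfin : 3 - 4 * π ^ 2 / (s:ℝ) ^ 2 > 3 - 4 * π / ((s:ℝ) - 1) := by
    have h1 : (0:ℝ) < (s:ℝ) - 1 := by linarith
    have h2 : 4 * π ^ 2 / (s:ℝ) ^ 2 < 4 * π / ((s:ℝ) - 1) := by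
      rw [div_lt_div_iff₀ (by positivity) h1]
      have h3 : π * ((s:ℝ) - 1) < (s:ℝ) ^ 2 := by
        nlinarith [sq_nonneg ((s:ℝ) - 2), mul_lt_mul_of_pos_right Real.pi_lt_d2 h1]
      have h4 := mul_lt_mul_of_pos_left h3 (show (0:ℝ) < 4 * π by positivity)
      nlinarith [h4]
    linarith
  rw [hjq]
  calc cos (2 * π * (q:ℝ) / n) + cos (2 * π * (q:ℝ) * k / n) +
        Real.sqrt ((cos (2 * π * (q:ℝ) / n) - cos (2 * π * (q:ℝ) * k / n)) ^ 2 + 1)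
      ≥ (1 - 2 * π ^ 2 / (s:ℝ) ^ 2) + (1 - 2 * π ^ 2 / (s:ℝ) ^ 2) + 1 := by
        gcongr <;> linarith
    _ = 3 - 4 * π ^ 2 / (s:ℝ) ^ 2 := by ring
    _ > 3 - 4 * π / ((s:ℝ) - 1) := hfin
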